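/- Every torsion-free nilpotent group is left-orderable. -/

import Mathlib

/-- A group is left-orderable if it admits a left-invariant strict total order. -/
def LeftOrderable (G : Type*) [Group G] : Prop :=
  ∃ r : G → G → Prop, IsStrictTotalOrder G r ∧ ∀ a b c : G, r a b → r (c * a) (c * b)

/-- A monoid is torsion-free if every non-identity element has infinite order
(the definition `Monoid.IsTorsionFree` of the older Mathlib, since removed). -/
def Monoid.IsTorsionFree (G : Type*) [Monoid G] : Prop :=
  ∀ g : G, g ≠ 1 → ¬IsOfFinOrder g

section Aux

open Subgroup

/-- Helper for constructing `LeftOrderable` from the four axioms. -/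
lemma leftOrderable_mk {G : Type*} [Group G] (r : G → G → Prop)
    (tri : ∀ a b, r a b ∨ a = b ∨ r b a)
    (irr : ∀ a, ¬ r a a)
    (tr : ∀ a b c, r a b → r b c → r a c)
    (inv : ∀ a b c, r a b → r (c * a) (c * b)) : LeftOrderable G := by
  refine ⟨r, ?_, inv⟩
  haveI h1 : IsTrichotomous G r := ⟨fun a b h1 h2 => ((tri a b).resolve_left h1).resolve_right h2⟩
  haveI h2 : IsIrrefl G r := ⟨irr⟩
  haveI h3 : IsTrans G r := ⟨tr⟩
  haveI h4 : IsStrictOrder G r := {}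
  exact {}

/-- If the commutator of `a` and `b` is central, then `[a^n, b] = [a,b]^n`. -/
lemma pow_comm_aux {Q : Type*} [Group Q] (a b : Q)
    (hz : a * b * a⁻¹ * b⁻¹ ∈ Subgroup.center Q) (n : ℕ) :
    a ^ n * b * (a ^ n)⁻¹ * b⁻¹ = (a * b * a⁻¹ * b⁻¹) ^ n := by
  induction n with
  | zero => simp
  | succ n ih =>
    have h1 : a ^ n * b * (a ^ n)⁻¹ = (a * b * a⁻¹ * b⁻¹) ^ n * b := by
      have := congrArg (· * b) ih
      simpa [mul_assoc] using this
    have hcn := Subgroup.mem_center_iff.mp (pow_mem hz n)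
    calc a ^ (n + 1) * b * (a ^ (n + 1))⁻¹ * b⁻¹
        = a * (a ^ n * b * (a ^ n)⁻¹) * (a⁻¹ * b⁻¹) := by group
      _ = a * ((a * b * a⁻¹ * b⁻¹) ^ n * b) * (a⁻¹ * b⁻¹) := by rw [h1]
      _ = a * (a * b * a⁻¹ * b⁻¹) ^ n * (b * a⁻¹ * b⁻¹) := by group
      _ = (a * b * a⁻¹ * b⁻¹) ^ n * a * (b * a⁻¹ * b⁻¹) := by rw [hcn a]
      _ = (a * b * a⁻¹ * b⁻¹) ^ n * (a * b * a⁻¹ * b⁻¹) := by group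
      _ = (a * b * a⁻¹ * b⁻¹) ^ (n + 1) := (pow_succ _ n).symm

/-- In a torsion-free group, if `h` lies in the `(k+1)`-st term of the upper central
series and `h^n` lies in the `k`-th term, then `h` lies in the `k`-th term. -/
lemma isolated_step {G : Type*} [Group G] (hG : Monoid.IsTorsionFree G)
    {n : ℕ} (hn : n ≠ 0) :
    ∀ k, ∀ h : G, h ∈ Subgroup.upperCentralSeries G (k + 1) → h ^ n ∈ Subgroup.upperCentralSeries G k →
      h ∈ Subgroup.upperCentralSeries G k := by
  intro k
  induction k with
  | zero =>
    intro h _ hpow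
    rw [Subgroup.upperCentralSeries_zero, Subgroup.mem_bot] at hpow ⊢
    by_contra hne
    exact hG h hne (isOfFinOrder_iff_pow_eq_one.mpr ⟨n, Nat.pos_of_ne_zero hn, hpow⟩)
  | succ k ih =>
    intro h hmem hpow
    rw [Subgroup.mem_upperCentralSeries_succ_iff] at hmem hpow ⊢
    intro y
    set N := Subgroup.upperCentralSeries G k with hN
    set c := h * y * h⁻¹ * y⁻¹ with hc
    apply ih c (hmem y)
    -- it suffices to show `c ^ n ∈ N`
    have hcc : ((c : G) : G ⧸ N) ∈ Subgroup.center (G ⧸ N) := by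
      rw [Subgroup.mem_center_iff]
      intro g
      induction g using QuotientGroup.induction_on with
      | H w =>
        have h2 : c * w * c⁻¹ * w⁻¹ ∈ N :=
          (Subgroup.mem_upperCentralSeries_succ_iff).mp (hmem y) w
        have h3 : w * c * w⁻¹ * c⁻¹ ∈ N := by
          have := N.inv_mem h2
          have he : (c * w * c⁻¹ * w⁻¹)⁻¹ = w * c * w⁻¹ * c⁻¹ := by group
          rwa [he] at this
        have h4 : ((w * c * w⁻¹ * c⁻¹ : G) : G ⧸ N) = 1 :=
          (QuotientGroup.eq_one_iff _).mpr h3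
        have h5 : ((w : G ⧸ N) * c * (w : G ⧸ N)⁻¹ * (c : G ⧸ N)⁻¹ : G ⧸ N) = 1 := by
          simpa using h4
        have := commutatorElement_eq_one_iff_mul_comm.mp h5
        exact this
    have key := pow_comm_aux ((h : G) : G ⧸ N) ((y : G) : G ⧸ N)
      (by simpa [hc] using hcc) n
    have hL : (((h : G) : G ⧸ N)) ^ n * (y : G ⧸ N) * ((((h : G) : G ⧸ N)) ^ n)⁻¹
        * ((y : G ⧸ N))⁻¹ = 1 := by
      have h6 : h ^ n * y * (h ^ n)⁻¹ * y⁻¹ ∈ N := hpow y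
      have h7 : ((h ^ n * y * (h ^ n)⁻¹ * y⁻¹ : G) : G ⧸ N) = 1 :=
        (QuotientGroup.eq_one_iff _).mpr h6
      simpa using h7
    have h8 : (((h : G) : G ⧸ N) * (y : G ⧸ N) * ((h : G) : G ⧸ N)⁻¹
        * ((y : G ⧸ N))⁻¹) ^ n = 1 := by rw [← key]; exact hL
    have h9 : ((c ^ n : G) : G ⧸ N) = 1 := by
      simpa [hc] using h8
    exact (QuotientGroup.eq_one_iff _).mp h9

/-- In a torsion-free nilpotent group, the quotient by the center is torsion-free. -/
lemma isTorsionFree_quotient_center {G : Type*} [Group G] [Group.IsNilpotent G]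
    (hG : Monoid.IsTorsionFree G) :
    Monoid.IsTorsionFree (G ⧸ Subgroup.center G) := by
  intro g hg hfin
  obtain ⟨n, hnpos, hgn⟩ := isOfFinOrder_iff_pow_eq_one.mp hfin
  obtain ⟨x, rfl⟩ := QuotientGroup.mk_surjective g
  have hxn : x ^ n ∈ Subgroup.upperCentralSeries G 1 := by
    rw [Subgroup.upperCentralSeries_one]
    rw [← QuotientGroup.eq_one_iff]
    simpa using hgn
  -- x is in some term of the upper central series equal to ⊤
  obtain ⟨m, hm⟩ := Group.IsNilpotent.nilpotent (G := G)
  have hx : x ∈ Subgroup.upperCentralSeries G (m + 1) := by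
    have : Subgroup.upperCentralSeries G m ≤ Subgroup.upperCentralSeries G (m + 1) :=
      Subgroup.upperCentralSeries_mono G (Nat.le_succ m)
    rw [hm] at this
    exact this trivial
  -- descend
  have descend : ∀ j, x ∈ Subgroup.upperCentralSeries G (j + 1) → x ∈ Subgroup.upperCentralSeries G 1 := by
    intro j
    induction j with
    | zero => exact fun h => h
    | succ j ihj =>
      intro hj
      apply ihj
      apply isolated_step hG hnpos.ne' (j + 1) x hj
      exact Subgroup.upperCentralSeries_mono G (Nat.succ_le_succ (Nat.zero_le j)) hxn
  have hxc : x ∈ Subgroup.center G := by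
    rw [← Subgroup.upperCentralSeries_one]; exact descend m hx
  exact hg ((QuotientGroup.eq_one_iff _).mpr hxc)

/-- Left-orderability is preserved by extensions. -/
lemma leftOrderable_extension {G : Type*} [Group G] (N : Subgroup G) [N.Normal]
    (hN : LeftOrderable N) (hQ : LeftOrderable (G ⧸ N)) : LeftOrderable G := by
  obtain ⟨s, hs, hsl⟩ := hN
  obtain ⟨q, hq, hql⟩ := hQ
  have stri : ∀ a b, s a b ∨ a = b ∨ s b a := by haveI := hs; exact trichotomous
  have sirr := hs.irrefl
  have strans := hs.trans
  have qtri : ∀ a b, q a b ∨ a = b ∨ q b a := by haveI := hq; exact trichotomous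
  have qirr := hq.irrefl
  have qtrans := hq.trans
  -- product of s-positives is s-positive
  have spos : ∀ x y : N, s 1 x → s 1 y → s 1 (x * y) := by
    intro x y hx hy
    have h1 : s (x * 1) (x * y) := hsl 1 y x hy
    rw [mul_one] at h1
    exact strans 1 x (x * y) hx h1
  have sneg : ∀ x : N, s x 1 → s 1 x⁻¹ := by
    intro x hx
    have h1 : s (x⁻¹ * x) (x⁻¹ * 1) := hsl x 1 x⁻¹ hx
    rwa [inv_mul_cancel, mul_one] at h1
  apply leftOrderable_mk (fun a b : G => q (↑a) (↑b) ∨ ∃ h : a⁻¹ * b ∈ N, s 1 ⟨a⁻¹ * b, h⟩)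
  · -- trichotomous
    intro a b
    rcases qtri (a : G ⧸ N) (b : G ⧸ N) with hab | hab | hab
    · exact Or.inl (Or.inl hab)
    · -- equal in quotient
      have hmem : a⁻¹ * b ∈ N := QuotientGroup.eq.mp hab
      by_cases heq : a = b
      · exact Or.inr (Or.inl heq)
      · have hne : (⟨a⁻¹ * b, hmem⟩ : N) ≠ 1 := by
          intro hcon
          apply heq
          have : a⁻¹ * b = 1 := congrArg Subtype.val hcon
          rw [inv_mul_eq_one] at this
          exact this
        rcases stri 1 ⟨a⁻¹ * b, hmem⟩ with h1 | h1 | h1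
        · exact Or.inl (Or.inr ⟨hmem, h1⟩)
        · exact absurd h1.symm hne
        · -- b to a
          right; right
          have hmem' : b⁻¹ * a ∈ N := by
            have := N.inv_mem hmem
            have he : (a⁻¹ * b)⁻¹ = b⁻¹ * a := by group
            rwa [he] at this
          refine Or.inr ⟨hmem', ?_⟩
          have := sneg ⟨a⁻¹ * b, hmem⟩ h1
          have hval : (⟨a⁻¹ * b, hmem⟩ : N)⁻¹ = ⟨b⁻¹ * a, hmem'⟩ := by
            ext
            simp [mul_inv_rev]
          rwa [hval] at this
    · exact Or.inr (Or.inr (Or.inl hab))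
  · -- irreflexive
    intro a hr
    rcases hr with h1 | ⟨h1, h2⟩
    · exact qirr _ h1
    · have hval : (⟨a⁻¹ * a, h1⟩ : N) = 1 := by ext; simp
      rw [hval] at h2
      exact sirr 1 h2
  · -- transitive
    intro a b c hab hbc
    rcases hab with h1 | ⟨h1, h1s⟩ <;> rcases hbc with h2 | ⟨h2, h2s⟩
    · exact Or.inl (qtrans _ _ _ h1 h2)
    · have hbc' : (b : G ⧸ N) = c := QuotientGroup.eq.mpr h2
      exact Or.inl (hbc' ▸ h1)
    · have hab' : (a : G ⧸ N) = b := QuotientGroup.eq.mpr h1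
      exact Or.inl (hab' ▸ h2)
    · have hmem : a⁻¹ * c ∈ N := by
        have := N.mul_mem h1 h2
        have he : a⁻¹ * b * (b⁻¹ * c) = a⁻¹ * c := by group
        rwa [he] at this
      refine Or.inr ⟨hmem, ?_⟩
      have := spos ⟨a⁻¹ * b, h1⟩ ⟨b⁻¹ * c, h2⟩ h1s h2s
      have hval : (⟨a⁻¹ * b, h1⟩ : N) * ⟨b⁻¹ * c, h2⟩ = ⟨a⁻¹ * c, hmem⟩ := by
        ext
        show a⁻¹ * b * (b⁻¹ * c) = a⁻¹ * c
        group
      rwa [hval] at this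
  · -- left invariance
    intro a b c hr
    rcases hr with h1 | ⟨h1, h1s⟩
    · left
      have : ((c * a : G) : G ⧸ N) = (c : G ⧸ N) * a := rfl
      rw [this]
      have : ((c * b : G) : G ⧸ N) = (c : G ⧸ N) * b := rfl
      rw [this]
      exact hql _ _ _ h1
    · right
      have he : (c * a)⁻¹ * (c * b) = a⁻¹ * b := by group
      refine ⟨by rw [he]; exact h1, ?_⟩
      have hval : (⟨(c * a)⁻¹ * (c * b), by rw [he]; exact h1⟩ : N) = ⟨a⁻¹ * b, h1⟩ := by
        ext; exact he
      rw [hval]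
      exact h1s

/-- A torsion-free commutative group is left-orderable. -/
lemma leftOrderable_of_isTorsionFree_comm {A : Type*} [CommGroup A]
    (h : Monoid.IsTorsionFree A) : LeftOrderable A := by
  classical
  -- pass to the additive group
  have h' : IsAddTorsionFree (Additive A) := by
    refine .of_not_isOfFinAddOrder fun g hg hfin => ?_
    exact h (Additive.toMul g) (by simpa using hg) (isOfFinAddOrder_ofMul_iff.mp hfin)
  haveI : NoZeroSMulDivisors ℤ (Additive A) := IsAddTorsionFree.to_noZeroSMulDivisors_int
  -- localize at the nonzero integers
  let S := nonZeroDivisors ℤ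
  let V := LocalizedModule S (Additive A)
  let K := FractionRing ℤ
  let f₀ : Additive A →ₗ[ℤ] V := LocalizedModule.mkLinearMap S (Additive A)
  have hf₀ : Function.Injective f₀ := by
    intro m m' hmm
    have : LocalizedModule.mk m (1 : S) = LocalizedModule.mk m' (1 : S) := hmm
    rw [LocalizedModule.mk_eq] at this
    obtain ⟨u, hu⟩ := this
    simp only [one_smul] at hu
    have hu' : (u : ℤ) • m = (u : ℤ) • m' := by
      simpa [Submonoid.smul_def] using hu
    have hune : (u : ℤ) ≠ 0 := nonZeroDivisors.coe_ne_zero u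
    exact smul_right_injective (Additive A) hune hu'
  -- V is a vector space over the fraction field K
  let b := Module.Basis.ofVectorSpace K V
  let ι := Module.Basis.ofVectorSpaceIndex K V
  letI : LinearOrder ι := IsWellOrder.linearOrder WellOrderingRel
  let e : K ≃+* ℚ := (FractionRing.algEquiv ℤ ℚ).toRingEquiv
  let f₂ : (ι →₀ K) ≃+ (ι →₀ ℚ) := Finsupp.mapRange.addEquiv e.toAddEquiv
  let F : A → Lex (ι →₀ ℚ) := fun a => toLex (f₂ (b.repr (f₀ (Additive.ofMul a))))
  have hFinj : Function.Injective F := by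
    intro x y hxy
    have := toLex.injective hxy
    have := f₂.injective this
    have := b.repr.injective this
    have := hf₀ this
    exact Additive.ofMul.injective this
  have hFadd : ∀ x y : A, F (x * y) = F x + F y := by
    intro x y
    show toLex (f₂ (b.repr (f₀ (Additive.ofMul x + Additive.ofMul y)))) = _
    rw [map_add, map_add, map_add]
    rfl
  apply leftOrderable_mk (fun x y => F x < F y)
  · intro x y
    rcases lt_trichotomy (F x) (F y) with h1 | h1 | h1
    · exact Or.inl h1
    · exact Or.inr (Or.inl (hFinj h1))
    · exact Or.inr (Or.inr h1)
  · intro x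
    exact lt_irrefl (F x)
  · intro x y z h1 h2
    exact lt_trans h1 h2
  · intro x y c hxy
    rw [hFadd c x, hFadd c y]
    exact add_lt_add_right hxy _

end Aux

/-- Every torsion-free nilpotent group is left-orderable. -/
theorem leftOrderable_of_torsionFree_nilpotent (G : Type*) [Group G]
    [Group.IsNilpotent G] (h : Monoid.IsTorsionFree G) : LeftOrderable G := by
  revert h
  refine nilpotent_center_quotient_ind
    (P := fun G _ _ => Monoid.IsTorsionFree G → LeftOrderable G) G ?_ ?_
  · intro H _ _ _
    apply leftOrderable_mk (fun _ _ => False)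
    · intro a b; exact Or.inr (Or.inl (Subsingleton.elim a b))
    · intro a ha; exact ha
    · intro a b c h1 _; exact h1
    · intro a b c h1; exact h1
  · intro H _ _ ih hH
    have hQ : LeftOrderable (H ⧸ Subgroup.center H) :=
      ih (isTorsionFree_quotient_center hH)
    have hN : LeftOrderable (Subgroup.center H) :=
      open IsMulCommutative in
      leftOrderable_of_isTorsionFree_comm (A := Subgroup.center H) (fun g hg hfin =>
        hH (g : H) (fun hc => hg (Subtype.ext hc))
        (isOfFinOrder_iff_pow_eq_one.mpr (by
          obtain ⟨n, hn, he⟩ := isOfFinOrder_iff_pow_eq_one.mp hfin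
          exact ⟨n, hn, congrArg Subtype.val he⟩)))
    exact leftOrderable_extension (Subgroup.center H) hN hQ
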